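/- arXiv:2002.05360 — 2 statements merged into one kernel-verified Lean document; each statement's English description precedes it below -/
import Mathlib

section
/- Let T > 0, k > 0 and let F : [0,T] → [0,∞) be continuous, nondecreasing with F(0) = 0. Suppose z : [0,T] → (0,∞) is C¹, nonincreasing, with z(0) > 0, and satisfies −z'(t) ≤ k F(t) z(t) + k F(t) ∫₀ᵗ (−z'(τ)) dτ for all t. Then z(0)·t ≤ (∫₀ᵗ z(τ) dτ) · exp(k ∫₀ᵗ F(τ) dτ) for all t ∈ [0,T]. -/
open MeasureTheory Real Set intervalIntegral

/-- Double Gronwall estimate: if `z > 0` is `C¹`, nonincreasing and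
`-z'(t) ≤ k F(t) z(t) + k F(t) ∫₀ᵗ (-z'(τ)) dτ` with `F ≥ 0` continuous,
nondecreasing, `F(0) = 0`, then
`z(0)·t ≤ (∫₀ᵗ z) · exp(k ∫₀ᵗ F)` on `[0,T]`. -/
theorem double_gronwall_estimate
    (T k : ℝ) (hT : 0 < T) (hk : 0 < k)
    (F z z' : ℝ → ℝ)
    (hFc : ContinuousOn F (Icc 0 T)) (hF0 : ∀ t, 0 ≤ F t)
    (hFmono : MonotoneOn F (Icc 0 T)) (hF00 : F 0 = 0)
    (hzd : ∀ t ∈ Icc (0:ℝ) T, HasDerivAt z (z' t) t)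
    (hzpos : ∀ t, 0 < z t) (hzanti : AntitoneOn z (Icc 0 T))
    (hineq : ∀ t ∈ Icc (0:ℝ) T,
      -z' t ≤ k * F t * z t + k * F t * ∫ τ in (0:ℝ)..t, -z' τ) :
    ∀ t ∈ Icc (0:ℝ) T,
      z 0 * t ≤ (∫ τ in (0:ℝ)..t, z τ) * Real.exp (k * ∫ τ in (0:ℝ)..t, F τ) := by
  -- notation
  set G : ℝ → ℝ := fun u => k * ∫ τ in (0:ℝ)..u, F τ with hGdef
  set g : ℝ → ℝ := fun τ => k * F τ * z τ * Real.exp (-(G τ)) with hgdef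
  set A : ℝ → ℝ := fun u => ∫ τ in (0:ℝ)..u, g τ with hAdef
  set h : ℝ → ℝ := fun τ => z τ * Real.exp (-(G τ)) with hhdef
  set Z : ℝ → ℝ := fun u => ∫ τ in (0:ℝ)..u, h τ with hZdef
  have hIicc : uIcc (0:ℝ) T = Icc 0 T := uIcc_of_le hT.le
  have hintIcc : interior (Icc (0:ℝ) T) = Ioo 0 T := interior_Icc
  -- continuity of z
  have hzc : ContinuousOn z (Icc 0 T) := fun t ht =>
    (hzd t ht).continuousAt.continuousWithinAt
  -- continuity of primitive of F, hence of G
  have hFintT : IntegrableOn F (Icc 0 T) := hFc.integrableOn_Icc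
  have hGc : ContinuousOn G (Icc 0 T) := by
    apply continuousOn_const.mul
    have := intervalIntegral.continuousOn_primitive_interval (f := F) (μ := volume)
      (a := (0:ℝ)) (b := T) (by rwa [hIicc])
    rwa [hIicc] at this
  have hEc : ContinuousOn (fun τ => Real.exp (-(G τ))) (Icc 0 T) :=
    Real.continuous_exp.comp_continuousOn hGc.neg
  have hgc : ContinuousOn g (Icc 0 T) :=
    (((continuousOn_const.mul hFc).mul hzc).mul hEc)
  have hhc : ContinuousOn h (Icc 0 T) := hzc.mul hEc
  -- interval integrability on [0,t] for t ∈ Icc 0 T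
  have hsub : ∀ t ∈ Icc (0:ℝ) T, Icc (0:ℝ) t ⊆ Icc (0:ℝ) T := fun t ht =>
    Icc_subset_Icc le_rfl ht.2
  have hFi : ∀ t ∈ Icc (0:ℝ) T, IntervalIntegrable F volume 0 t := fun t ht =>
    (hFc.mono (hsub t ht)).intervalIntegrable_of_Icc ht.1
  have hgi : ∀ t ∈ Icc (0:ℝ) T, IntervalIntegrable g volume 0 t := fun t ht =>
    (hgc.mono (hsub t ht)).intervalIntegrable_of_Icc ht.1
  have hhi : ∀ t ∈ Icc (0:ℝ) T, IntervalIntegrable h volume 0 t := fun t ht =>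
    (hhc.mono (hsub t ht)).intervalIntegrable_of_Icc ht.1
  have hzi : ∀ t ∈ Icc (0:ℝ) T, IntervalIntegrable z volume 0 t := fun t ht =>
    (hzc.mono (hsub t ht)).intervalIntegrable_of_Icc ht.1
  -- G nonneg on Icc
  have hGnn : ∀ t ∈ Icc (0:ℝ) T, 0 ≤ G t := by
    intro t ht
    have : 0 ≤ ∫ τ in (0:ℝ)..t, F τ :=
      intervalIntegral.integral_nonneg ht.1 (fun x _ => hF0 x)
    exact mul_nonneg hk.le this
  -- derivative of G at interior points
  have hG' : ∀ t ∈ Ioo (0:ℝ) T, HasDerivAt G (k * F t) t := by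
    intro t ht
    have htI : t ∈ Icc (0:ℝ) T := Ioo_subset_Icc_self ht
    have hFTC : HasDerivAt (fun u => ∫ τ in (0:ℝ)..u, F τ) (F t) t := by
      refine intervalIntegral.integral_hasDerivAt_right (hFi t htI) ?_ ?_
      · exact (hFc.mono Ioo_subset_Icc_self).stronglyMeasurableAtFilter isOpen_Ioo t ht
      · exact hFc.continuousAt (Icc_mem_nhds ht.1 ht.2)
    exact hFTC.const_mul k
  -- key pointwise bound: -z' t ≤ k * F t * z 0
  have hbound : ∀ t ∈ Icc (0:ℝ) T, -z' t ≤ k * F t * z 0 := by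
    intro t ht
    have hJ : (∫ τ in (0:ℝ)..t, -z' τ) ≤ z 0 - z t := by
      by_cases hi : IntervalIntegrable z' volume 0 t
      · have heq : (∫ τ in (0:ℝ)..t, z' τ) = z t - z 0 := by
          apply intervalIntegral.integral_eq_sub_of_hasDerivAt
          · intro x hx
            apply hzd
            rw [uIcc_of_le ht.1] at hx
            exact hsub t ht hx
          · exact hi
        rw [intervalIntegral.integral_neg, heq]
        simp
      · have hni : ¬ IntervalIntegrable (fun τ => -z' τ) volume 0 t := by
          intro hcon
          exact hi (by simpa [Pi.neg_def] using hcon.neg)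
        rw [intervalIntegral.integral_undef hni]
        have := hzanti (left_mem_Icc.2 (ht.1.trans ht.2)) ht ht.1
        linarith
    have hkF : 0 ≤ k * F t := mul_nonneg hk.le (hF0 t)
    have := hineq t ht
    nlinarith [mul_le_mul_of_nonneg_left hJ hkF]
  -- φ is antitone
  have hphi : AntitoneOn (fun u => (z 0 - z u) * Real.exp (-(G u)) - A u) (Icc 0 T) := by
    apply antitoneOn_of_hasDerivWithinAt_nonpos (f' := fun u =>
        Real.exp (-(G u)) * (-z' u - k * F u * z 0)) (convex_Icc 0 T)
    · apply ContinuousOn.sub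
      · exact (continuousOn_const.sub hzc).mul hEc
      · have := intervalIntegral.continuousOn_primitive_interval (f := g) (μ := volume)
          (a := (0:ℝ)) (b := T) (by rw [hIicc]; exact hgc.integrableOn_Icc)
        rwa [hIicc] at this
    · rw [hintIcc]
      intro t ht
      have htI : t ∈ Icc (0:ℝ) T := Ioo_subset_Icc_self ht
      have hE' : HasDerivAt (fun u => Real.exp (-(G u)))
          (Real.exp (-(G t)) * (-(k * F t))) t := ((hG' t ht).neg).exp
      have hA' : HasDerivAt A (g t) t := by
        refine intervalIntegral.integral_hasDerivAt_right (hgi t htI) ?_ ?_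
        · exact (hgc.mono Ioo_subset_Icc_self).stronglyMeasurableAtFilter isOpen_Ioo t ht
        · exact hgc.continuousAt (Icc_mem_nhds ht.1 ht.2)
      have hz' : HasDerivAt z (z' t) t := hzd t htI
      have hD : HasDerivAt (fun u => (z 0 - z u) * Real.exp (-(G u)) - A u)
          ((0 - z' t) * Real.exp (-(G t)) + (z 0 - z t) * (Real.exp (-(G t)) * (-(k * F t)))
            - g t) t := ((((hasDerivAt_const t (z 0)).sub hz').mul hE').sub hA')
      have : (0 - z' t) * Real.exp (-(G t)) + (z 0 - z t) * (Real.exp (-(G t)) * (-(k * F t)))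
            - g t = Real.exp (-(G t)) * (-z' t - k * F t * z 0) := by
        simp only [hgdef]; ring
      rw [this] at hD
      exact hD.hasDerivWithinAt
    · rw [hintIcc]
      intro t ht
      have htI : t ∈ Icc (0:ℝ) T := Ioo_subset_Icc_self ht
      have h1 : -z' t - k * F t * z 0 ≤ 0 := by linarith [hbound t htI]
      exact mul_nonpos_of_nonneg_of_nonpos (Real.exp_pos _).le h1
  -- hence (z 0 - z t) ≤ A t * exp (G t)
  have hkey : ∀ t ∈ Icc (0:ℝ) T, z 0 - z t ≤ A t * Real.exp (G t) := by
    intro t ht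
    have h0 : (0:ℝ) ∈ Icc (0:ℝ) T := left_mem_Icc.2 hT.le
    have hmono := hphi h0 ht ht.1
    have h1 : (z 0 - z t) * Real.exp (-(G t)) ≤ A t := by
      have h2 : (z 0 - z t) * Real.exp (-(G t)) - A t ≤ 0 := by
        simpa [hAdef] using hmono
      linarith
    have h2 := mul_le_mul_of_nonneg_right h1 (Real.exp_pos (G t)).le
    rwa [mul_assoc, ← Real.exp_add, neg_add_cancel, Real.exp_zero, mul_one] at h2
  -- ψ is monotone
  have hpsi : MonotoneOn (fun u => Z u * Real.exp (G u) - z 0 * u) (Icc 0 T) := by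
    apply monotoneOn_of_hasDerivWithinAt_nonneg (f' := fun u =>
        z u + k * F u * Real.exp (G u) * Z u - z 0) (convex_Icc 0 T)
    · apply ContinuousOn.sub
      · refine ContinuousOn.mul ?_ (Real.continuous_exp.comp_continuousOn hGc)
        have := intervalIntegral.continuousOn_primitive_interval (f := h) (μ := volume)
          (a := (0:ℝ)) (b := T) (by rw [hIicc]; exact hhc.integrableOn_Icc)
        rwa [hIicc] at this
      · exact (continuousOn_const.mul continuousOn_id)
    · rw [hintIcc]
      intro t ht
      have htI : t ∈ Icc (0:ℝ) T := Ioo_subset_Icc_self ht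
      have hZ' : HasDerivAt Z (h t) t := by
        refine intervalIntegral.integral_hasDerivAt_right (hhi t htI) ?_ ?_
        · exact (hhc.mono Ioo_subset_Icc_self).stronglyMeasurableAtFilter isOpen_Ioo t ht
        · exact hhc.continuousAt (Icc_mem_nhds ht.1 ht.2)
      have hE' : HasDerivAt (fun u => Real.exp (G u))
          (Real.exp (G t) * (k * F t)) t := (hG' t ht).exp
      have hD : HasDerivAt (fun u => Z u * Real.exp (G u) - z 0 * u)
          ((h t) * Real.exp (G t) + Z t * (Real.exp (G t) * (k * F t)) - z 0 * 1) t :=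
        (hZ'.mul hE').sub ((hasDerivAt_id t).const_mul (z 0))
      have : (h t) * Real.exp (G t) + Z t * (Real.exp (G t) * (k * F t)) - z 0 * 1
          = z t + k * F t * Real.exp (G t) * Z t - z 0 := by
        simp only [hhdef, Real.exp_neg]
        field_simp
      rw [this] at hD
      exact hD.hasDerivWithinAt
    · rw [hintIcc]
      intro t ht
      have htI : t ∈ Icc (0:ℝ) T := Ioo_subset_Icc_self ht
      -- A t ≤ k * F t * Z t
      have hA_le : A t ≤ k * F t * Z t := by
        have hmono := intervalIntegral.integral_mono_on (μ := volume) ht.1.le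
          (hgi t htI) (((hhi t htI).const_mul (k * F t))) ?mono
        case mono =>
          intro x hx
          have hxI : x ∈ Icc (0:ℝ) T := hsub t htI hx
          have hFx : F x ≤ F t := hFmono hxI htI hx.2
          have hEx : (0:ℝ) < Real.exp (-(G x)) := Real.exp_pos _
          have hzx : (0:ℝ) < z x := hzpos x
          have h1 : k * F x ≤ k * F t := mul_le_mul_of_nonneg_left hFx hk.le
          have h2 : (k * F x) * (z x * Real.exp (-(G x)))
              ≤ (k * F t) * (z x * Real.exp (-(G x))) :=
            mul_le_mul_of_nonneg_right h1 (mul_pos hzx hEx).le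
          show k * F x * z x * Real.exp (-(G x)) ≤ k * F t * (z x * Real.exp (-(G x)))
          calc k * F x * z x * Real.exp (-(G x))
              = (k * F x) * (z x * Real.exp (-(G x))) := by ring
            _ ≤ (k * F t) * (z x * Real.exp (-(G x))) := h2
        calc A t ≤ ∫ τ in (0:ℝ)..t, k * F t * h τ := hmono
          _ = k * F t * Z t := by rw [intervalIntegral.integral_const_mul]
      have hkF : 0 ≤ k * F t := mul_nonneg hk.le (hF0 t)
      have hstep : z 0 - z t ≤ k * F t * Real.exp (G t) * Z t := by
        have h1 := hkey t htI
        have h2 : A t * Real.exp (G t) ≤ (k * F t * Z t) * Real.exp (G t) :=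
          mul_le_mul_of_nonneg_right hA_le (Real.exp_pos _).le
        nlinarith
      linarith
  -- conclude
  intro t ht
  have h0 : (0:ℝ) ∈ Icc (0:ℝ) T := left_mem_Icc.2 hT.le
  have hmono := hpsi h0 ht ht.1
  have hZt : z 0 * t ≤ Z t * Real.exp (G t) := by
    have h2 : 0 ≤ Z t * Real.exp (G t) - z 0 * t := by
      simpa [hZdef] using hmono
    linarith
  have hZle : Z t ≤ ∫ τ in (0:ℝ)..t, z τ := by
    apply intervalIntegral.integral_mono_on ht.1 (hhi t ht) (hzi t ht)
    intro x hx
    have hGx : 0 ≤ G x := hGnn x (hsub t ht hx)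
    have hE1 : Real.exp (-(G x)) ≤ 1 := Real.exp_le_one_iff.2 (by linarith)
    have := hzpos x
    simp only [hhdef]
    nlinarith
  show z 0 * t ≤ (∫ τ in (0:ℝ)..t, z τ) * Real.exp (G t)
  calc z 0 * t ≤ Z t * Real.exp (G t) := hZt
    _ ≤ (∫ τ in (0:ℝ)..t, z τ) * Real.exp (G t) :=
        mul_le_mul_of_nonneg_right hZle (Real.exp_pos _).le
end

section
/- Let 0 < μ < 1 and T > 0. The set L⁺_{1-μ}(0,T) of functions of the form f(t) = ∫₀ᵗ g²(τ)/(t-τ)^{1-μ} dτ, where g ranges over nonnegative functions in L²(0,T), is dense in the cone of nonnegative functions of L²(0,T): equivalently, if f₀ ∈ L²(0,T) satisfies ∫₀^T f₀(t) (∫₀ᵗ h(τ)(t-τ)^{μ-1} dτ) dt = 0 for every nonnegative h ∈ L¹(0,T), then f₀ = 0 almost everywhere. -/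
open MeasureTheory Real Set intervalIntegral

lemma beta_ii_left {a b : ℝ} (ha : -1 < a) :
    IntervalIntegrable (fun x => x ^ a * (1 - x) ^ b) volume 0 (1/2) := by
  apply IntervalIntegrable.mul_continuousOn (intervalIntegrable_rpow' ha)
  intro x hx
  rw [uIcc_of_le (by norm_num : (0:ℝ) ≤ 1/2)] at hx
  exact ((Real.continuousAt_rpow_const _ _ (Or.inl (by linarith [hx.2]))).comp
    (by fun_prop : ContinuousAt (fun x : ℝ => 1 - x) x)).continuousWithinAt

lemma beta_ii {a b : ℝ} (ha : -1 < a) (hb : -1 < b) :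
    IntervalIntegrable (fun x => x ^ a * (1 - x) ^ b) volume 0 1 := by
  refine (beta_ii_left ha).trans ?_
  rw [IntervalIntegrable.iff_comp_neg]
  convert ((beta_ii_left (b := a) hb).comp_add_right 1).symm using 1
  · ext1 x
    show (-x) ^ a * (1 - -x) ^ b = (x + 1) ^ b * (1 - (x + 1)) ^ a
    rw [mul_comm]
    congr 2 <;> ring
  · norm_num
  · norm_num

lemma abel_subst {μ s t : ℝ} (hst : s < t) :
    ∫ τ in s..t, (τ - s) ^ (-μ) * (t - τ) ^ (μ - 1)
      = ∫ u in (0:ℝ)..1, u ^ (-μ) * (1 - u) ^ (μ - 1) := by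
  have hd : (0:ℝ) < t - s := sub_pos.mpr hst
  have h1 : (∫ τ in s..t, (τ - s) ^ (-μ) * (t - τ) ^ (μ - 1))
      = ∫ x in (0:ℝ)..(t - s), x ^ (-μ) * ((t - s) - x) ^ (μ - 1) := by
    rw [show (∫ x in (0:ℝ)..(t-s), x ^ (-μ) * ((t - s) - x) ^ (μ - 1))
        = ∫ x in (0:ℝ)..(t-s), ((x + s) - s) ^ (-μ) * (t - (x + s)) ^ (μ - 1) by
      apply integral_congr; intro x _; ring_nf]
    rw [integral_comp_add_right (fun τ => (τ - s) ^ (-μ) * (t - τ) ^ (μ - 1)) s]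
    norm_num
  have h2 : (∫ x in (0:ℝ)..(t - s), x ^ (-μ) * ((t - s) - x) ^ (μ - 1))
      = (t - s) • ∫ u in (0:ℝ)..1, ((t-s) * u) ^ (-μ) * ((t - s) - (t-s) * u) ^ (μ - 1) := by
    rw [integral_comp_mul_left (fun x => x ^ (-μ) * ((t - s) - x) ^ (μ - 1)) hd.ne']
    rw [mul_zero, mul_one, smul_smul, mul_inv_cancel₀ hd.ne', one_smul]
  have h3 : (∫ u in (0:ℝ)..1, ((t-s) * u) ^ (-μ) * ((t - s) - (t-s) * u) ^ (μ - 1))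
      = (t - s)⁻¹ * ∫ u in (0:ℝ)..1, u ^ (-μ) * (1 - u) ^ (μ - 1) := by
    rw [← intervalIntegral.integral_const_mul]
    apply integral_congr
    intro u hu
    rw [uIcc_of_le (by norm_num : (0:ℝ) ≤ 1)] at hu
    have h1u : (0:ℝ) ≤ 1 - u := by linarith [hu.2]
    show ((t-s) * u) ^ (-μ) * ((t - s) - (t-s) * u) ^ (μ - 1)
        = (t - s)⁻¹ * (u ^ (-μ) * (1 - u) ^ (μ - 1))
    have : (t - s) - (t - s) * u = (t - s) * (1 - u) := by ring
    rw [this, Real.mul_rpow hd.le hu.1, Real.mul_rpow hd.le h1u]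
    have : (t - s) ^ (-μ) * ((t - s) ^ (μ - 1)) = (t - s)⁻¹ := by
      rw [← Real.rpow_add hd, show -μ + (μ - 1) = -1 by ring, Real.rpow_neg_one]
    calc (t-s) ^ (-μ) * u ^ (-μ) * ((t-s) ^ (μ-1) * (1-u) ^ (μ-1))
        = ((t-s) ^ (-μ) * (t-s) ^ (μ-1)) * (u ^ (-μ) * (1-u) ^ (μ-1)) := by ring
      _ = (t - s)⁻¹ * (u ^ (-μ) * (1 - u) ^ (μ - 1)) := by rw [this]
  rw [h1, h2, h3, smul_eq_mul, ← mul_assoc, mul_inv_cancel₀ hd.ne', one_mul]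

/-- Density of `L⁺_{1-μ}(0,T)` in the nonnegative cone of `L²(0,T)`, in the dual
formulation: if `f₀ ∈ L²(0,T)` satisfies
`∫₀^T f₀(t) (∫₀ᵗ h(τ)(t-τ)^{μ-1} dτ) dt = 0` for every nonnegative
`h ∈ L¹(0,T)`, then `f₀ = 0` almost everywhere. -/
theorem abel_range_dense
    (T μ : ℝ) (hT : 0 < T) (hμ0 : 0 < μ) (hμ1 : μ < 1)
    (f₀ : ℝ → ℝ) (hf : MemLp f₀ 2 (volume.restrict (Ioc 0 T)))
    (horth : ∀ h : ℝ → ℝ, (∀ τ, 0 ≤ h τ) → IntegrableOn h (Ioc 0 T) →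
      ∫ t in Ioc 0 T, f₀ t * ∫ τ in Ioc 0 t, h τ * (t - τ) ^ (μ - 1) = 0) :
    f₀ =ᵐ[volume.restrict (Ioc 0 T)] 0 := by
  have hμ' : (-1:ℝ) < -μ := by linarith
  have hμ'' : (-1:ℝ) < μ - 1 := by linarith
  set c : ℝ := ∫ u in (0:ℝ)..1, u ^ (-μ) * (1 - u) ^ (μ - 1) with hc
  have hcpos : 0 < c := by
    apply intervalIntegral_pos_of_pos_on (beta_ii hμ' hμ'') _ one_pos
    intro x hx
    have h1 : 0 < x := hx.1
    have h2 : 0 < 1 - x := by linarith [hx.2]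
    positivity
  haveI hfin : IsFiniteMeasure (volume.restrict (Ioc (0:ℝ) T)) := by
    constructor
    rw [Measure.restrict_apply_univ]
    exact measure_Ioc_lt_top
  have hf1 : IntegrableOn f₀ (Ioc 0 T) :=
    memLp_one_iff_integrable.mp (hf.mono_exponent (by norm_num))
  -- Step 1: for every `s ≥ 0`, `∫_{(s,T]} f₀ = 0`.
  have key : ∀ s : ℝ, 0 ≤ s → ∫ t in Ioc s T, f₀ t = 0 := by
    intro s hs0
    rcases le_or_gt T s with hTs | hsT
    · rw [Ioc_eq_empty (not_lt.mpr hTs), Measure.restrict_empty, integral_zero_measure]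
    set h : ℝ → ℝ := (Ioi s).indicator (fun τ => (τ - s) ^ (-μ)) with hh
    have hnn : ∀ τ, 0 ≤ h τ := by
      intro τ
      apply indicator_nonneg
      intro τ hτ
      exact Real.rpow_nonneg (by linarith [mem_Ioi.mp hτ]) _
    have hint_base : IntervalIntegrable (fun τ => (τ - s) ^ (-μ)) volume s T := by
      have := (intervalIntegrable_rpow' (a := 0) (b := T - s) hμ').comp_sub_right s
      simpa using this
    have hIoc : IntegrableOn (fun τ => (τ - s) ^ (-μ)) (Ioc s T) := by
      rw [← uIoc_of_le hsT.le]
      exact intervalIntegrable_iff.mp hint_base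
    have hint : IntegrableOn h (Ioc 0 T) := by
      rw [hh, IntegrableOn, integrable_indicator_iff measurableSet_Ioi, IntegrableOn,
        Measure.restrict_restrict measurableSet_Ioi]
      exact hIoc.mono_set (fun x hx => ⟨hx.1, hx.2.2⟩)
    have hK : ∀ t ∈ Ioc (0:ℝ) T, (∫ τ in Ioc 0 t, h τ * (t - τ) ^ (μ - 1))
        = (Ioi s).indicator (fun _ => c) t := by
      intro t _
      have heq : ∀ τ, h τ * (t - τ) ^ (μ - 1)
          = (Ioi s).indicator (fun τ => (τ - s) ^ (-μ) * (t - τ) ^ (μ - 1)) τ := by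
        intro τ
        rw [hh]
        by_cases hτ : τ ∈ Ioi s
        · rw [indicator_of_mem hτ, indicator_of_mem hτ]
        · rw [indicator_of_notMem hτ, indicator_of_notMem hτ, zero_mul]
      simp_rw [heq]
      rw [setIntegral_indicator measurableSet_Ioi]
      rcases le_or_gt t s with hts | hst
      · have hempty : Ioc (0:ℝ) t ∩ Ioi s = ∅ := by
          ext x
          simp only [mem_inter_iff, mem_Ioc, mem_Ioi, mem_empty_iff_false, iff_false, not_and]
          rintro ⟨_, h2⟩ h3
          linarith
        rw [hempty, Measure.restrict_empty, integral_zero_measure,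
          indicator_of_notMem (by simpa using not_lt.mpr hts)]
      · have hset : Ioc (0:ℝ) t ∩ Ioi s = Ioc s t := by
          ext x
          simp only [mem_inter_iff, mem_Ioc, mem_Ioi]
          constructor
          · rintro ⟨⟨_, h2⟩, h3⟩; exact ⟨h3, h2⟩
          · rintro ⟨h1, h2⟩; exact ⟨⟨lt_of_le_of_lt hs0 h1, h2⟩, h1⟩
        rw [hset, ← intervalIntegral.integral_of_le hst.le, abel_subst hst,
          indicator_of_mem (mem_Ioi.mpr hst)]
    have h0 := horth h hnn hint
    have h1 : (∫ t in Ioc 0 T, f₀ t * ∫ τ in Ioc 0 t, h τ * (t - τ) ^ (μ - 1))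
        = ∫ t in Ioc 0 T, (Ioi s).indicator (fun t => c * f₀ t) t := by
      apply setIntegral_congr_fun measurableSet_Ioc
      intro t ht
      dsimp only
      rw [hK t ht]
      by_cases hts : t ∈ Ioi s
      · rw [indicator_of_mem hts, indicator_of_mem hts, mul_comm]
      · rw [indicator_of_notMem hts, indicator_of_notMem hts, mul_zero]
    have hset2 : Ioc (0:ℝ) T ∩ Ioi s = Ioc s T := by
      ext x
      simp only [mem_inter_iff, mem_Ioc, mem_Ioi]
      constructor
      · rintro ⟨⟨_, h2⟩, h3⟩; exact ⟨h3, h2⟩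
      · rintro ⟨h1, h2⟩; exact ⟨⟨lt_of_le_of_lt hs0 h1, h2⟩, h1⟩
    rw [h1, setIntegral_indicator measurableSet_Ioi, hset2, MeasureTheory.integral_const_mul] at h0
    exact (mul_eq_zero.mp h0).resolve_left hcpos.ne'
  -- Step 2: the indicator extension of `f₀` has vanishing integral on every `Ioc a b`.
  set g : ℝ → ℝ := (Ioc 0 T).indicator f₀ with hg
  have hgint : Integrable g := (integrable_indicator_iff measurableSet_Ioc).mpr hf1
  have key2 : ∀ a b : ℝ, ∫ t in Ioc a b, g t = 0 := by
    intro a b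
    rw [hg, setIntegral_indicator measurableSet_Ioc, Set.Ioc_inter_Ioc]
    rcases le_or_gt (min b T) (max a 0) with hba | hab
    · rw [Ioc_eq_empty (not_lt.mpr hba), Measure.restrict_empty, integral_zero_measure]
    · have ha0 : (0:ℝ) ≤ max a 0 := le_max_right a 0
      have hbT : min b T ≤ T := min_le_right b T
      have hi1 : IntegrableOn f₀ (Ioc (max a 0) (min b T)) :=
        hf1.mono_set (fun x hx => ⟨lt_of_le_of_lt ha0 hx.1, le_trans hx.2 hbT⟩)
      have hi2 : IntegrableOn f₀ (Ioc (min b T) T) :=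
        hf1.mono_set (fun x hx => ⟨lt_of_le_of_lt (le_trans ha0 hab.le) hx.1, hx.2⟩)
      have hsum := setIntegral_union (Set.Ioc_disjoint_Ioc_of_le le_rfl) measurableSet_Ioc hi1 hi2
      rw [Ioc_union_Ioc_eq_Ioc hab.le hbT, key _ ha0, key _ (le_trans ha0 hab.le)] at hsum
      linarith
  -- Step 3: Lebesgue differentiation gives `g = 0` a.e.
  have hzero : ∀ᵐ x, g x = 0 := by
    filter_upwards [IsUnifLocDoublingMeasure.ae_tendsto_average (μ := (volume : Measure ℝ))
      hgint.locallyIntegrable 1] with x hx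
    have hδ : Filter.Tendsto (fun n : ℕ => (1:ℝ)/(n+1)) Filter.atTop (nhdsWithin 0 (Ioi 0)) := by
      apply tendsto_nhdsWithin_of_tendsto_nhds_of_eventually_within
      · exact tendsto_one_div_add_atTop_nhds_zero_nat
      · filter_upwards with n
        have : (0:ℝ) < 1/(n+1) := by positivity
        exact this
    have hmem : ∀ᶠ n : ℕ in Filter.atTop, x ∈ Metric.closedBall x (1 * (1/(n+1))) := by
      filter_upwards with n
      apply Metric.mem_closedBall_self
      positivity
    have htend := hx (fun _ => x) (fun n : ℕ => 1/(n+1)) hδ hmem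
    have havg : ∀ n : ℕ, ⨍ y in Metric.closedBall x (1/(n+1)), g y = 0 := by
      intro n
      rw [setAverage_eq, Real.closedBall_eq_Icc, integral_Icc_eq_integral_Ioc, key2, smul_zero]
    exact tendsto_nhds_unique (htend.congr havg) tendsto_const_nhds
  rw [Filter.EventuallyEq, ae_restrict_iff' measurableSet_Ioc]
  filter_upwards [hzero] with x hx hmem
  rw [Pi.zero_apply]
  rwa [hg, indicator_of_mem hmem] at hx
end
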